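/- arXiv:1804.07246 — 3 statements merged into one kernel-verified Lean document; each statement's English description precedes it below -/
import Mathlib

section
/- For α ∈ (1, 2] and every positive integer p, the coefficient c_p^α = (-1)^p Γ(α+1)/(Γ(α/2 - p + 1) Γ(α/2 + p + 1)) is nonpositive. -/
/-- The fractional difference coefficients `c_p^α`. -/
noncomputable def c (α : ℝ) (p : ℤ) : ℝ :=
  (-1 : ℝ) ^ p * Real.Gamma (α + 1) /
    (Real.Gamma (α / 2 - p + 1) * Real.Gamma (α / 2 + p + 1))

lemma gamma_alt_sign (t : ℝ) (ht : 0 < t) (ht1 : t < 1) :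
    ∀ n : ℕ, 0 < (-1 : ℝ) ^ n * Real.Gamma (t - n) := by
  intro n
  induction n with
  | zero => simpa using Real.Gamma_pos_of_pos ht
  | succ n ih =>
    have hne : t - ((n + 1 : ℕ) : ℝ) ≠ 0 := by
      push_cast
      intro h
      have h' : t = (n : ℝ) + 1 := by linarith
      have : (0 : ℝ) ≤ n := Nat.cast_nonneg n
      linarith
    have hrec : Real.Gamma (t - n) = (t - ((n + 1 : ℕ) : ℝ)) * Real.Gamma (t - ((n + 1 : ℕ) : ℝ)) := by
      have h := Real.Gamma_add_one hne
      rw [← h]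
      congr 1
      push_cast
      ring
    have hneg : t - ((n + 1 : ℕ) : ℝ) < 0 := by
      push_cast
      have : (0 : ℝ) ≤ n := Nat.cast_nonneg n
      linarith
    rw [hrec] at ih
    have h1 : 0 < (t - ((n + 1 : ℕ) : ℝ)) * ((-1 : ℝ) ^ n * Real.Gamma (t - ((n + 1 : ℕ) : ℝ))) := by
      have e : (-1 : ℝ) ^ n * ((t - ((n + 1 : ℕ) : ℝ)) * Real.Gamma (t - ((n + 1 : ℕ) : ℝ)))
          = (t - ((n + 1 : ℕ) : ℝ)) * ((-1 : ℝ) ^ n * Real.Gamma (t - ((n + 1 : ℕ) : ℝ))) := by ring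
      linarith [e ▸ ih]
    have h2 : (-1 : ℝ) ^ n * Real.Gamma (t - ((n + 1 : ℕ) : ℝ)) < 0 := by
      by_contra h
      push_neg at h
      have := mul_nonpos_of_nonpos_of_nonneg hneg.le h
      linarith
    have e2 : (-1 : ℝ) ^ (n + 1) * Real.Gamma (t - ((n + 1 : ℕ) : ℝ))
        = -((-1 : ℝ) ^ n * Real.Gamma (t - ((n + 1 : ℕ) : ℝ))) := by ring
    rw [e2]
    linarith

theorem stmt_3 (α : ℝ) (hα : α ∈ Set.Ioc (1 : ℝ) 2) (p : ℤ) (hp : 1 ≤ p) :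
    c α p ≤ 0 := by
  obtain ⟨hα1, hα2⟩ := hα
  obtain ⟨n, rfl⟩ : ∃ n : ℕ, p = (n : ℤ) + 1 := ⟨(p - 1).toNat, by omega⟩
  have hnum : 0 < Real.Gamma (α + 1) := Real.Gamma_pos_of_pos (by linarith)
  have hden2 : 0 < Real.Gamma (α / 2 + (((n : ℤ) + 1 : ℤ) : ℝ) + 1) := by
    apply Real.Gamma_pos_of_pos
    push_cast
    have : (0 : ℝ) ≤ n := Nat.cast_nonneg n
    linarith
  have hpow : ((-1 : ℝ) ^ ((n : ℤ) + 1)) = -((-1 : ℝ) ^ n) := by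
    rw [zpow_add_one₀ (by norm_num), zpow_natCast]
    ring
  rcases eq_or_lt_of_le hα2 with h2 | h2
  · -- α = 2
    subst h2
    rcases Nat.eq_zero_or_pos n with h0 | h0
    · subst h0
      have e1 : (2 : ℝ) / 2 - ((((0:ℕ) : ℤ) + 1 : ℤ) : ℝ) + 1 = 1 := by norm_num
      have e2 : (2 : ℝ) / 2 + ((((0:ℕ) : ℤ) + 1 : ℤ) : ℝ) + 1 = 3 := by norm_num
      have e3 : ((-1 : ℝ) ^ ((((0:ℕ) : ℤ)) + 1)) = -1 := by norm_num
      unfold c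
      rw [e1, e2, e3, Real.Gamma_one, one_mul]
      have h3 : 0 < Real.Gamma 3 := Real.Gamma_pos_of_pos (by norm_num)
      apply div_nonpos_of_nonpos_of_nonneg <;> linarith
    · have hz : Real.Gamma (-(n : ℝ) + 1) = 0 := by
        have e : (-(n : ℝ) + 1) = -(((n - 1 : ℕ)) : ℝ) := by
          push_cast [Nat.cast_sub h0]; ring
        rw [e]; exact Real.Gamma_neg_nat_eq_zero _
      simp [c, hz]
  · -- α < 2
    have ht : 0 < α / 2 := by linarith
    have ht1 : α / 2 < 1 := by linarith
    have hsign := gamma_alt_sign (α / 2) ht ht1 n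
    have harg : α / 2 - (((n : ℤ) + 1 : ℤ) : ℝ) + 1 = α / 2 - n := by push_cast; ring
    unfold c
    rw [harg, hpow]
    rw [div_nonpos_iff]
    rcases Nat.even_or_odd n with he | ho
    · have hP : (-1 : ℝ) ^ n = 1 := he.neg_one_pow
      rw [hP] at hsign ⊢
      rw [one_mul] at hsign
      right
      exact ⟨by nlinarith, mul_nonneg hsign.le hden2.le⟩
    · have hP : (-1 : ℝ) ^ n = -1 := ho.neg_one_pow
      rw [hP] at hsign ⊢
      have hGs : Real.Gamma (α / 2 - n) < 0 := by nlinarith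
      left
      exact ⟨by nlinarith, mul_nonpos_of_nonpos_of_nonneg hGs.le hden2.le⟩
end

section
/- Let u⁰ be a real number with |u⁰| > 1 and Δt > 0, and define u¹ = u⁰ / sqrt((u⁰)² + (1 - (u⁰)²) e^{-Δt}), assuming the quantity under the square root is positive. Then |u¹| ≤ |u⁰|. -/
theorem stmt_7 (u₀ Δt : ℝ) (hΔt : 0 < Δt) (h : 1 < |u₀|)
    (hpos : 0 < u₀ ^ 2 + (1 - u₀ ^ 2) * Real.exp (-Δt)) :
    |u₀ / Real.sqrt (u₀ ^ 2 + (1 - u₀ ^ 2) * Real.exp (-Δt))| ≤ |u₀| := by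
  have he : Real.exp (-Δt) < 1 := by
    rw [Real.exp_lt_one_iff]; linarith
  have hu : 1 < u₀ ^ 2 := by nlinarith [sq_abs u₀]
  have hD : (1:ℝ) ≤ u₀ ^ 2 + (1 - u₀ ^ 2) * Real.exp (-Δt) := by
    nlinarith [Real.exp_pos (-Δt)]
  have hs : (1:ℝ) ≤ Real.sqrt (u₀ ^ 2 + (1 - u₀ ^ 2) * Real.exp (-Δt)) := by
    have := Real.sqrt_le_sqrt hD
    simpa using this
  rw [abs_div, abs_of_nonneg (Real.sqrt_nonneg _)]
  calc |u₀| / Real.sqrt (u₀ ^ 2 + (1 - u₀ ^ 2) * Real.exp (-Δt)) ≤ |u₀| / 1 :=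
        div_le_div_of_nonneg_left (abs_nonneg _) one_pos hs
    _ = |u₀| := div_one _
end

section
/- For any real u⁰ and Δt > 0, with u¹ = u⁰ / sqrt((u⁰)² + (1 - (u⁰)²) e^{-Δt}), one has |u¹| ≤ max(|u⁰|, 1). -/
theorem stmt_8 (u₀ Δt : ℝ) (hΔt : 0 < Δt) :
    |u₀ / Real.sqrt (u₀ ^ 2 + (1 - u₀ ^ 2) * Real.exp (-Δt))| ≤ max |u₀| 1 := by
  set e := Real.exp (-Δt) with he_def
  have he : 0 < e := Real.exp_pos _
  have he1 : e < 1 := by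
    rw [he_def]
    exact Real.exp_lt_one_iff.mpr (by linarith)
  have hD : 0 < u₀ ^ 2 + (1 - u₀ ^ 2) * e := by nlinarith [sq_nonneg u₀]
  rcases le_total (u₀ ^ 2) 1 with h | h
  · apply le_max_of_le_right
    rw [abs_div, abs_of_nonneg (Real.sqrt_nonneg _),
      div_le_one (Real.sqrt_pos.mpr hD)]
    rw [← Real.sqrt_sq_eq_abs]
    exact Real.sqrt_le_sqrt (by nlinarith)
  · apply le_max_of_le_left
    rw [abs_div, abs_of_nonneg (Real.sqrt_nonneg _)]
    have h1 : 1 ≤ Real.sqrt (u₀ ^ 2 + (1 - u₀ ^ 2) * e) := by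
      have : Real.sqrt 1 ≤ Real.sqrt (u₀ ^ 2 + (1 - u₀ ^ 2) * e) :=
        Real.sqrt_le_sqrt (by nlinarith)
      simpa using this
    exact div_le_self (abs_nonneg _) h1
end
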